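/- arXiv:2511.17101 — 3 statements merged into one kernel-verified Lean document; each statement's English description precedes it below -/
import Mathlib

section
/- Let (C_n)_{n≥0} be a simple random walk on ℤ with C_0 = 0 (steps ±1 with probability 1/2 each). Define M_n = C_n - 2·min_{0≤i≤n} C_i. Then for every m ≥ 0 and n ≥ 1, P(M_n = m) = 2(m+1)²/(n+m+2) · P(C_n = m). -/
open MeasureTheory ProbabilityTheory


noncomputable def Qb (n : ℕ) (e : ℤ) : ℝ :=
  if 0 ≤ (n : ℤ) + e ∧ Even ((n : ℤ) + e) then
    (n.choose (((n : ℤ) + e).toNat / 2) : ℝ) / 2 ^ n else 0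

lemma Qb_nonneg (n : ℕ) (e : ℤ) : 0 ≤ Qb n e := by
  unfold Qb; split <;> positivity

lemma Qb_pascal (n : ℕ) (e : ℤ) : Qb (n + 1) e = (Qb n (e - 1) + Qb n (e + 1)) / 2 := by
  unfold Qb
  rcases Int.even_or_odd ((n : ℤ) + e) with hpar | hpar
  · have h1 : ¬ Even (((n : ℕ) + 1 : ℕ) + e : ℤ) := by
      rcases hpar with ⟨k, hk⟩; intro ⟨l, hl⟩; push_cast at hl; omega
    have h2 : ¬ Even ((n : ℤ) + (e - 1)) := by
      rcases hpar with ⟨k, hk⟩; intro ⟨l, hl⟩; omega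
    have h3 : ¬ Even ((n : ℤ) + (e + 1)) := by
      rcases hpar with ⟨k, hk⟩; intro ⟨l, hl⟩; omega
    rw [if_neg (by tauto), if_neg (by tauto), if_neg (by tauto)]
    norm_num
  · have hev : Even (((n : ℕ) + 1 : ℕ) + e : ℤ) := by
      rcases hpar with ⟨k, hk⟩; exact ⟨k + 1, by push_cast; omega⟩
    have hev1 : Even ((n : ℤ) + (e + 1)) := by
      rcases hpar with ⟨k, hk⟩; exact ⟨k + 1, by omega⟩
    have hev2 : Even ((n : ℤ) + (e - 1)) := by
      rcases hpar with ⟨k, hk⟩; exact ⟨k, by omega⟩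
    rcases lt_trichotomy ((n : ℤ) + 1 + e) 0 with hs | hs | hs
    · rw [if_neg (by push_cast; omega), if_neg (by omega), if_neg (by omega)]
      norm_num
    · rw [if_pos ⟨by push_cast; omega, hev⟩, if_neg (by omega), if_pos ⟨by omega, hev1⟩]
      have h0 : ((((n : ℕ) + 1 : ℕ) : ℤ) + e).toNat / 2 = 0 := by push_cast; omega
      have h0' : ((n : ℤ) + (e + 1)).toNat / 2 = 0 := by omega
      rw [h0, h0']
      simp [pow_succ]
      ring
    · have hs2 : 2 ≤ (n : ℤ) + 1 + e := by rcases hev with ⟨k, hk⟩; push_cast at hk; omega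
      obtain ⟨k', hkk⟩ : ∃ k', (((n : ℤ) + 1 + e).toNat) / 2 = k' + 1 :=
        ⟨(((n : ℤ) + 1 + e).toNat) / 2 - 1, by omega⟩
      rw [if_pos ⟨by push_cast; omega, hev⟩, if_pos ⟨by omega, hev2⟩, if_pos ⟨by omega, hev1⟩]
      have e1 : ((((n : ℕ) + 1 : ℕ) : ℤ) + e).toNat / 2 = k' + 1 := by push_cast; omega
      have e2 : ((n : ℤ) + (e - 1)).toNat / 2 = k' := by
        rcases hev with ⟨l, hl⟩; push_cast at hl; omega
      have e3 : ((n : ℤ) + (e + 1)).toNat / 2 = k' + 1 := by push_cast; omega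
      rw [e1, e2, e3, Nat.choose_succ_succ]
      push_cast
      rw [pow_succ]
      ring

lemma Qb_symm (n : ℕ) (e : ℤ) : Qb n (-e) = Qb n e := by
  unfold Qb
  rcases Int.even_or_odd ((n : ℤ) + e) with hpar | hpar
  · have hev' : Even ((n : ℤ) + (-e)) := by rcases hpar with ⟨k, hk⟩; exact ⟨k - e, by omega⟩
    obtain ⟨l, hl⟩ := hpar
    rcases le_or_gt 0 ((n:ℤ) + e) with h1 | h1 <;> rcases le_or_gt 0 ((n:ℤ) + (-e)) with h2 | h2
    · rw [if_pos ⟨h2, hev'⟩, if_pos ⟨h1, ⟨l, hl⟩⟩]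
      rw [show ((n : ℤ) + (-e)).toNat / 2 = n - ((n : ℤ) + e).toNat / 2 by omega,
        Nat.choose_symm (by omega)]
    · rw [if_neg (by omega), if_pos ⟨h1, ⟨l, hl⟩⟩]
      rw [Nat.choose_eq_zero_of_lt (show n < ((n : ℤ) + e).toNat / 2 by omega)]; norm_num
    · rw [if_pos ⟨h2, hev'⟩, if_neg (by omega)]
      rw [Nat.choose_eq_zero_of_lt (show n < ((n : ℤ) + (-e)).toNat / 2 by omega)]; norm_num
    · rw [if_neg (by omega), if_neg (by omega)]
  · have h1 : ¬ Even ((n : ℤ) + e) := by rcases hpar with ⟨k, hk⟩; intro ⟨l, hl⟩; omega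
    have h2 : ¬ Even ((n : ℤ) + (-e)) := by rcases hpar with ⟨k, hk⟩; intro ⟨l, hl⟩; omega
    rw [if_neg (by tauto), if_neg (by tauto)]

lemma Qb_ratio (n m : ℕ) :
    ((m:ℝ)+1) * (Qb n (m : ℤ) - Qb n ((m:ℤ)+2))
      = 2*((m:ℝ)+1)^2/((n:ℝ)+(m:ℝ)+2) * Qb n (m : ℤ) := by
  unfold Qb
  rcases Int.even_or_odd ((n:ℤ)+(m:ℤ)) with hpar | hpar
  · have hev2 : Even ((n:ℤ)+((m:ℤ)+2)) := by rcases hpar with ⟨l,hl⟩; exact ⟨l+1, by omega⟩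
    rw [if_pos ⟨by positivity, hpar⟩, if_pos ⟨by positivity, hev2⟩]
    obtain ⟨l, hl⟩ := hpar
    set k := (((n:ℤ)+(m:ℤ)).toNat)/2 with hkdef
    have hk2 : 2*k = n + m := by omega
    have e2 : (((n:ℤ)+((m:ℤ)+2)).toNat)/2 = k + 1 := by omega
    rw [e2]
    have hcast : ((2*k:ℕ):ℝ) = ((n+m:ℕ):ℝ) := by exact_mod_cast congrArg Nat.cast hk2
    have hn : (n:ℝ) = 2*(k:ℝ) - (m:ℝ) := by push_cast at hcast; linarith
    rcases le_or_gt k n with hkn | hkn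
    · have key : (n.choose (k+1) : ℝ) * ((k:ℝ)+1) = (n.choose k : ℝ) * ((n:ℝ) - (k:ℝ)) := by
        have h2 : ((n.choose (k+1) * (k+1) : ℕ) : ℝ) = ((n.choose k * (n-k) : ℕ) : ℝ) :=
          congrArg Nat.cast (Nat.choose_succ_right_eq n k)
        push_cast [Nat.cast_sub hkn] at h2
        linarith
      have main : ((m:ℝ)+1) * ((n.choose k : ℝ) - (n.choose (k+1) : ℝ)) * ((k:ℝ)+1)
          = ((m:ℝ)+1)^2 * (n.choose k : ℝ) := by
        linear_combination (-(((m:ℝ)+1))) * key - (((m:ℝ)+1)*(n.choose k : ℝ)) * hn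
      have hdeneq : (n:ℝ)+(m:ℝ)+2 = 2*((k:ℝ)+1) := by linarith
      have h2 : (2:ℝ)*((k:ℝ)+1) ≠ 0 := by positivity
      rw [hdeneq, div_mul_eq_mul_div, eq_div_iff h2]
      linear_combination (2/(2:ℝ)^n) * main
    · rw [Nat.choose_eq_zero_of_lt hkn, Nat.choose_eq_zero_of_lt (by omega : n < k+1)]
      simp
  · have h1 : ¬ Even ((n:ℤ)+(m:ℤ)) := by rcases hpar with ⟨l,hl⟩; intro ⟨x,hx⟩; omega
    have h2 : ¬ Even ((n:ℤ)+((m:ℤ)+2)) := by rcases hpar with ⟨l,hl⟩; intro ⟨x,hx⟩; omega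
    rw [if_neg (by tauto), if_neg (by tauto)]
    simp

section Walk
variable {Ω : Type*} [MeasurableSpace Ω] (X : ℕ → Ω → ℤ)

def Aset (n : ℕ) (j : ℕ) (e : ℤ) : Set Ω :=
  {ω | (∑ i ∈ Finset.range n, X i ω = e) ∧
    ∀ k ∈ Finset.range (n + 1), -(j : ℤ) ≤ ∑ i ∈ Finset.range k, X i ω}

lemma partial_sum_eq (n k : ℕ) (hk : k ≤ n) (f : ℕ → ℤ) :
    ∑ i ∈ Finset.range k, f i = ∑ i : Fin n, if (i : ℕ) < k then f i else 0 := by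
  rw [Fin.sum_univ_eq_sum_range (fun i => if i < k then f i else 0) n, ← Finset.sum_filter]
  congr 1
  ext i
  simp only [Finset.mem_filter, Finset.mem_range]
  omega

lemma Aset_eq_preimage (n j : ℕ) (e : ℤ) :
    Aset X n j e = (fun ω (i : Fin n) => X i ω) ⁻¹'
      {v : Fin n → ℤ | (∑ i, v i = e) ∧
        ∀ k ∈ Finset.range (n + 1), -(j : ℤ) ≤ ∑ i : Fin n, if (i : ℕ) < k then v i else 0} := by
  have hs : ∀ ω, ∑ i : Fin n, X (i : ℕ) ω = ∑ i ∈ Finset.range n, X i ω :=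
    fun ω => (Fin.sum_univ_eq_sum_range (fun i => X i ω) n)
  have hps : ∀ ω k, k ≤ n → (∑ i ∈ Finset.range k, X i ω
      = ∑ i : Fin n, if (i : ℕ) < k then X (i : ℕ) ω else 0) :=
    fun ω k hk => partial_sum_eq n k hk (fun i => X i ω)
  ext ω
  simp only [Aset, Set.mem_setOf_eq, Set.mem_preimage]
  constructor
  · rintro ⟨h1, h2⟩
    refine ⟨by rw [hs ω]; exact h1, fun k hk => ?_⟩
    rw [← hps ω k (Nat.lt_succ_iff.mp (Finset.mem_range.mp hk))]
    exact h2 k hk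
  · rintro ⟨h1, h2⟩
    refine ⟨by rw [← hs ω]; exact h1, fun k hk => ?_⟩
    rw [hps ω k (Nat.lt_succ_iff.mp (Finset.mem_range.mp hk))]
    exact h2 k hk

lemma Aset_measurable (hmeas : ∀ i, Measurable (X i)) (n j : ℕ) (e : ℤ) :
    MeasurableSet (Aset X n j e) := by
  rw [Aset_eq_preimage]
  exact measurable_pi_lambda (fun ω (i : Fin n) => X (i : ℕ) ω) (fun i => hmeas (i : ℕ))
    ((Set.to_countable _).measurableSet)

variable {μ : Measure Ω} [IsProbabilityMeasure μ]

omit [IsProbabilityMeasure μ] in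
lemma indep_tup (hmeas : ∀ i, Measurable (X i))
    (hindep : iIndepFun X μ) (n : ℕ) :
    IndepFun (fun ω (i : Fin n) => X i ω) (X n) μ := by
  have h := hindep.indepFun_finset (Finset.range n) {n}
    (by simp [Finset.disjoint_singleton_right]) hmeas
  have h2 : IndepFun (fun ω (i : Fin n) => X i ω) (X n) μ := h.comp (φ := fun g (i : Fin n) => g ⟨(i : ℕ), Finset.mem_range.mpr i.isLt⟩)
    (ψ := fun g => g ⟨n, Finset.mem_singleton_self n⟩)
    (measurable_pi_lambda _ (fun i => measurable_pi_apply _)) (measurable_pi_apply _)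
  exact h2

omit [IsProbabilityMeasure μ] in
lemma indep_inter (hmeas : ∀ i, Measurable (X i))
    (hindep : iIndepFun X μ) (n j : ℕ) (e ε : ℤ) :
    μ (Aset X n j e ∩ {ω | X n ω = ε}) = μ (Aset X n j e) * μ {ω | X n ω = ε} := by
  rw [Aset_eq_preimage]
  have h : {ω | X n ω = ε} = X n ⁻¹' {ε} := rfl
  rw [h]
  exact (indep_tup X hmeas hindep n).measure_inter_preimage_eq_mul _ _
    (Set.to_countable _).measurableSet (measurableSet_singleton ε)

lemma split_step' (hmeas : ∀ i, Measurable (X i))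
    (hlaw : ∀ i, μ {ω | X i ω = 1} = 1 / 2 ∧ μ {ω | X i ω = -1} = 1 / 2)
    (n : ℕ) (S : Set Ω) (hS : MeasurableSet S) :
    μ S = μ (S ∩ {ω | X n ω = 1}) + μ (S ∩ {ω | X n ω = -1}) := by
  have hm1 : MeasurableSet {ω | X n ω = 1} := (hmeas n) (measurableSet_singleton 1)
  have hm2 : MeasurableSet {ω | X n ω = -1} := (hmeas n) (measurableSet_singleton (-1))
  have hdisj : Disjoint {ω | X n ω = 1} {ω | X n ω = -1} := by
    rw [Set.disjoint_left]; intro ω h1 h2; simp only [Set.mem_setOf_eq] at h1 h2; omega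
  have hU : μ ({ω | X n ω = 1} ∪ {ω | X n ω = -1}) = 1 := by
    rw [measure_union hdisj hm2, (hlaw n).1, (hlaw n).2, ENNReal.div_add_div_same,
      one_add_one_eq_two, ENNReal.div_self two_ne_zero ENNReal.ofNat_ne_top]
  have hUc : μ ({ω | X n ω = 1} ∪ {ω | X n ω = -1})ᶜ = 0 := by
    rw [measure_compl (hm1.union hm2) (measure_ne_top μ _), hU, measure_univ, tsub_self]
  calc μ S = μ (S ∩ ({ω | X n ω = 1} ∪ {ω | X n ω = -1})) := (measure_inter_conull hUc).symm
    _ = μ (S ∩ {ω | X n ω = 1} ∪ S ∩ {ω | X n ω = -1}) := by rw [Set.inter_union_distrib_left]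
    _ = μ (S ∩ {ω | X n ω = 1}) + μ (S ∩ {ω | X n ω = -1}) := by
        rw [measure_union (hdisj.mono Set.inter_subset_right Set.inter_subset_right)
          (hS.inter hm2)]


lemma A_val (hmeas : ∀ i, Measurable (X i))
    (hindep : iIndepFun X μ)
    (hlaw : ∀ i, μ {ω | X i ω = 1} = 1 / 2 ∧ μ {ω | X i ω = -1} = 1 / 2) :
    ∀ n (j : ℕ) (e : ℤ), -(j : ℤ) - 1 ≤ e →
      (μ (Aset X n j e)).toReal = Qb n e - Qb n (-2 * (j : ℤ) - 2 - e) := by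
  intro n
  induction n with
  | zero =>
    intro j e he
    rcases eq_or_ne e 0 with rfl | hne
    · have huniv : Aset X 0 j 0 = Set.univ := Set.eq_univ_of_forall fun ω =>
        ⟨by simp, fun k hk => by
          have hk0 : k = 0 := by simpa using hk
          subst hk0; simp⟩
      rw [huniv, measure_univ]
      have h1 : Qb 0 0 = 1 := by unfold Qb; norm_num
      have h2 : Qb 0 (-2 * (j : ℤ) - 2 - 0) = 0 := by
        unfold Qb; rw [if_neg]; rintro ⟨h, -⟩; push_cast at h; omega
      rw [h1, h2]; norm_num
    · have hempty : Aset X 0 j e = ∅ := by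
        ext ω
        simp only [Aset, Set.mem_setOf_eq, Set.mem_empty_iff_false, iff_false, not_and,
          Finset.range_zero, Finset.sum_empty]
        intro h; exact absurd h.symm hne
      rw [hempty, measure_empty]
      have h1 : Qb 0 e = 0 := by
        unfold Qb
        split_ifs with h
        · obtain ⟨h0, ⟨l, hl⟩⟩ := h
          rw [Nat.choose_eq_zero_of_lt (show 0 < (((0:ℕ):ℤ) + e).toNat / 2 by omega)]
          norm_num
        · rfl
      have h2 : Qb 0 (-2 * (j : ℤ) - 2 - e) = 0 := by
        unfold Qb; rw [if_neg]; rintro ⟨h, -⟩; push_cast at h; omega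
      rw [h1, h2]; norm_num
  | succ n IH =>
    intro j e he
    rcases lt_or_ge e (-(j : ℤ)) with hlt | hge
    · have hempty : Aset X (n + 1) j e = ∅ := by
        ext ω
        simp only [Aset, Set.mem_setOf_eq, Set.mem_empty_iff_false, iff_false, not_and]
        intro h1 h2
        have := h2 (n + 1) (Finset.self_mem_range_succ (n + 1))
        omega
      have harg : -2 * (j : ℤ) - 2 - e = e := by omega
      rw [hempty, measure_empty, harg]
      simp
    · have hsplit := split_step' X hmeas hlaw (n + 1 - 1) (Aset X (n + 1) j e)
        (Aset_measurable X hmeas _ _ _)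
      simp only [Nat.add_sub_cancel] at hsplit
      have hint1 : Aset X (n + 1) j e ∩ {ω | X n ω = 1}
          = Aset X n j (e - 1) ∩ {ω | X n ω = 1} := by
        ext ω
        simp only [Set.mem_inter_iff, Set.mem_setOf_eq, Aset]
        constructor
        · rintro ⟨⟨h1, h2⟩, hx⟩
          rw [Finset.sum_range_succ] at h1
          exact ⟨⟨by omega, fun k hk =>
            h2 k (Finset.mem_range.mpr (Nat.lt_succ_of_lt (Finset.mem_range.mp hk)))⟩, hx⟩
        · rintro ⟨⟨h1, h2⟩, hx⟩
          refine ⟨⟨by rw [Finset.sum_range_succ]; omega, fun k hk => ?_⟩, hx⟩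
          rcases Nat.lt_succ_iff_lt_or_eq.mp (Finset.mem_range.mp hk) with hk' | rfl
          · exact h2 k (Finset.mem_range.mpr hk')
          · rw [Finset.sum_range_succ]; omega
      have hint2 : Aset X (n + 1) j e ∩ {ω | X n ω = -1}
          = Aset X n j (e + 1) ∩ {ω | X n ω = -1} := by
        ext ω
        simp only [Set.mem_inter_iff, Set.mem_setOf_eq, Aset]
        constructor
        · rintro ⟨⟨h1, h2⟩, hx⟩
          rw [Finset.sum_range_succ] at h1
          exact ⟨⟨by omega, fun k hk =>
            h2 k (Finset.mem_range.mpr (Nat.lt_succ_of_lt (Finset.mem_range.mp hk)))⟩, hx⟩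
        · rintro ⟨⟨h1, h2⟩, hx⟩
          refine ⟨⟨by rw [Finset.sum_range_succ]; omega, fun k hk => ?_⟩, hx⟩
          rcases Nat.lt_succ_iff_lt_or_eq.mp (Finset.mem_range.mp hk) with hk' | rfl
          · exact h2 k (Finset.mem_range.mpr hk')
          · rw [Finset.sum_range_succ]; omega
      rw [hint1, hint2, indep_inter X hmeas hindep n j (e - 1) 1,
        indep_inter X hmeas hindep n j (e + 1) (-1), (hlaw n).1, (hlaw n).2] at hsplit
      have hh1 := IH j (e - 1) (by omega)
      have hh2 := IH j (e + 1) (by omega)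
      rw [hsplit, ENNReal.toReal_add (ENNReal.mul_ne_top (measure_ne_top μ _) (by norm_num))
        (ENNReal.mul_ne_top (measure_ne_top μ _) (by norm_num)),
        ENNReal.toReal_mul, ENNReal.toReal_mul, hh1, hh2]
      have hhalf : ((1 : ENNReal) / 2).toReal = (1 : ℝ) / 2 := by simp
      rw [hhalf, Qb_pascal n e, Qb_pascal n (-2 * (j : ℤ) - 2 - e)]
      have a1 : -2 * (j : ℤ) - 2 - e - 1 = -2 * (j : ℤ) - 2 - (e + 1) := by ring
      have a2 : -2 * (j : ℤ) - 2 - e + 1 = -2 * (j : ℤ) - 2 - (e - 1) := by ring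
      rw [a1, a2]
      ring


lemma C_val (hmeas : ∀ i, Measurable (X i))
    (hindep : iIndepFun X μ)
    (hlaw : ∀ i, μ {ω | X i ω = 1} = 1 / 2 ∧ μ {ω | X i ω = -1} = 1 / 2)
    (n : ℕ) (m : ℕ) :
    (μ {ω | ∑ i ∈ Finset.range n, X i ω = (m : ℤ)}).toReal = Qb n (m : ℤ) := by
  classical
  set G : Set Ω := {ω | ∀ i ∈ Finset.range n, X i ω = 1 ∨ X i ω = -1} with hG
  have hGc : μ Gᶜ = 0 := by
    have hsub : Gᶜ ⊆ ⋃ i ∈ Finset.range n, {ω | ¬(X i ω = 1 ∨ X i ω = -1)} := by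
      intro ω hω
      simp only [hG, Set.mem_compl_iff, Set.mem_setOf_eq, not_forall] at hω
      obtain ⟨i, hi, hne⟩ := hω
      exact Set.mem_biUnion hi hne
    refine measure_mono_null hsub ?_
    refine (measure_biUnion_null_iff (Finset.range n).countable_toSet).mpr fun i _ => ?_
    have hm1 : MeasurableSet {ω | X i ω = 1} := (hmeas i) (measurableSet_singleton 1)
    have hm2 : MeasurableSet {ω | X i ω = -1} := (hmeas i) (measurableSet_singleton (-1))
    have hdisj : Disjoint {ω | X i ω = 1} {ω | X i ω = -1} := by
      rw [Set.disjoint_left]; intro ω h1 h2; simp only [Set.mem_setOf_eq] at h1 h2; omega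
    have hU : μ ({ω | X i ω = 1} ∪ {ω | X i ω = -1}) = 1 := by
      rw [measure_union hdisj hm2, (hlaw i).1, (hlaw i).2, ENNReal.div_add_div_same,
        one_add_one_eq_two, ENNReal.div_self two_ne_zero ENNReal.ofNat_ne_top]
    have hUc : μ ({ω | X i ω = 1} ∪ {ω | X i ω = -1})ᶜ = 0 := by
      rw [measure_compl (hm1.union hm2) (measure_ne_top μ _), hU, measure_univ, tsub_self]
    have heq : {ω | ¬(X i ω = 1 ∨ X i ω = -1)} = ({ω | X i ω = 1} ∪ {ω | X i ω = -1})ᶜ := by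
      ext ω; simp [not_or]
    rw [heq]; exact hUc
  have hint : {ω | ∑ i ∈ Finset.range n, X i ω = (m : ℤ)} ∩ G = Aset X n n (m : ℤ) ∩ G := by
    ext ω
    simp only [Set.mem_inter_iff, Set.mem_setOf_eq, Aset, hG]
    constructor
    · rintro ⟨h1, h2⟩
      refine ⟨⟨h1, fun k hk => ?_⟩, h2⟩
      have hkn : k ≤ n := Nat.lt_succ_iff.mp (Finset.mem_range.mp hk)
      have hterm : ∀ i ∈ Finset.range k, (-1 : ℤ) ≤ X i ω := by
        intro i hi
        rcases h2 i (Finset.mem_range.mpr (lt_of_lt_of_le (Finset.mem_range.mp hi) hkn))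
          with h | h <;> omega
      have hbound : -(k : ℤ) ≤ ∑ i ∈ Finset.range k, X i ω := by
        calc -(k : ℤ) = ∑ _i ∈ Finset.range k, (-1 : ℤ) := by
              rw [Finset.sum_const, Finset.card_range]; ring
          _ ≤ ∑ i ∈ Finset.range k, X i ω := Finset.sum_le_sum hterm
      have hkn' : (k : ℤ) ≤ (n : ℤ) := by exact_mod_cast hkn
      omega
    · rintro ⟨⟨h1, _⟩, h2⟩; exact ⟨h1, h2⟩
  have step1 : μ {ω | ∑ i ∈ Finset.range n, X i ω = (m : ℤ)} = μ (Aset X n n (m : ℤ)) := by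
    rw [← measure_inter_conull hGc, hint, measure_inter_conull hGc]
  rw [step1, A_val X hmeas hindep hlaw n n (m : ℤ) (by push_cast; omega)]
  have h0 : Qb n (-2 * (n : ℤ) - 2 - (m : ℤ)) = 0 := by
    unfold Qb; rw [if_neg]; rintro ⟨h, -⟩; omega
  rw [h0]; ring

end Walk

/-- for a simple random walk `C` on `ℤ` with `C_0 = 0` (i.i.d. `±1` steps
`X`), setting `M_n = C_n - 2 min_{0≤i≤n} C_i`, one has
`P(M_n = m) = 2(m+1)²/(n+m+2) · P(C_n = m)` for all `m ≥ 0`, `n ≥ 1`. -/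
theorem stmt7 {Ω : Type*} [MeasurableSpace Ω] (μ : Measure Ω) [IsProbabilityMeasure μ]
    (X : ℕ → Ω → ℤ) (hmeas : ∀ i, Measurable (X i))
    (hindep : iIndepFun X μ)
    (hlaw : ∀ i, μ {ω | X i ω = 1} = 1 / 2 ∧ μ {ω | X i ω = -1} = 1 / 2)
    (C : ℕ → Ω → ℤ) (hC : ∀ n ω, C n ω = ∑ i ∈ Finset.range n, X i ω)
    (M : ℕ → Ω → ℤ)
    (hM : ∀ n ω, M n ω
      = C n ω - 2 * ((Finset.range (n + 1)).inf' Finset.nonempty_range_add_one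
          (fun i => C i ω))) :
    ∀ (n m : ℕ), 1 ≤ n →
      (μ {ω | M n ω = (m : ℤ)}).toReal
        = 2 * ((m : ℝ) + 1) ^ 2 / ((n : ℝ) + (m : ℝ) + 2)
          * (μ {ω | C n ω = (m : ℤ)}).toReal := by
  intro n m _
  have hAset : ∀ (j : ℕ) (e : ℤ), Aset X n j e
      = {ω | C n ω = e ∧ ∀ k ∈ Finset.range (n + 1), -(j : ℤ) ≤ C k ω} := by
    intro j e; ext ω; simp only [Aset, Set.mem_setOf_eq, hC]
  set mn : Ω → ℤ :=
    fun ω => (Finset.range (n + 1)).inf' Finset.nonempty_range_add_one (fun i => C i ω) with hmn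
  have hMn : ∀ ω, M n ω = C n ω - 2 * mn ω := fun ω => by rw [hM n ω, hmn]
  have hC0 : ∀ ω, C 0 ω = 0 := fun ω => by rw [hC]; simp
  have hmn_lb : ∀ ω k, k ∈ Finset.range (n + 1) → mn ω ≤ C k ω := fun ω k hk =>
    Finset.inf'_le _ hk
  have hmn_le0 : ∀ ω, mn ω ≤ 0 := fun ω => by
    have := hmn_lb ω 0 (Finset.mem_range.mpr (Nat.succ_pos n))
    rw [hC0 ω] at this; exact this
  have hmn_le : ∀ ω, mn ω ≤ C n ω := fun ω => hmn_lb ω n (Finset.self_mem_range_succ n)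
  have hmn_mem : ∀ ω, ∃ k ∈ Finset.range (n + 1), mn ω = C k ω := fun ω =>
    Finset.exists_mem_eq_inf' _ _
  set B : ℕ → Set Ω := fun j => {ω | C n ω = (m : ℤ) - 2 * j ∧ mn ω = -(j : ℤ)} with hB
  have hMdecomp : {ω | M n ω = (m : ℤ)} = ⋃ j ∈ Finset.range (m + 1), B j := by
    ext ω
    simp only [Set.mem_setOf_eq, Set.mem_iUnion, hB, Finset.mem_range]
    constructor
    · intro hMm
      have h0 := hmn_le0 ω
      obtain ⟨j, hj⟩ : ∃ j : ℕ, mn ω = -(j : ℤ) := ⟨(-(mn ω)).toNat, by omega⟩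
      have hMe := hMn ω
      have hle := hmn_le ω
      exact ⟨j, by omega, by omega, hj⟩
    · rintro ⟨j, hjm, h1, h2⟩
      rw [hMn ω, h1, h2]; ring
  have hB0 : B 0 = Aset X n 0 (m : ℤ) := by
    rw [hAset]
    ext ω
    simp only [hB, Set.mem_setOf_eq, Nat.cast_zero, neg_zero, mul_zero, sub_zero]
    constructor
    · rintro ⟨h1, h2⟩
      exact ⟨h1, fun k hk => by have := hmn_lb ω k hk; omega⟩
    · rintro ⟨h1, h2⟩
      refine ⟨h1, le_antisymm (hmn_le0 ω) ?_⟩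
      exact Finset.le_inf' _ _ (fun k hk => by have := h2 k hk; omega)
  have hBj : ∀ j : ℕ, 1 ≤ j →
      B j = Aset X n j ((m : ℤ) - 2 * j) \ Aset X n (j - 1) ((m : ℤ) - 2 * j) := by
    intro j hj
    rw [hAset, hAset]
    have hcast : ((j - 1 : ℕ) : ℤ) = (j : ℤ) - 1 := by push_cast [hj]; ring
    ext ω
    simp only [hB, Set.mem_setOf_eq, Set.mem_diff, hcast]
    constructor
    · rintro ⟨h1, h2⟩
      refine ⟨⟨h1, fun k hk => by have := hmn_lb ω k hk; omega⟩, ?_⟩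
      rintro ⟨-, hall⟩
      obtain ⟨k, hk, hkeq⟩ := hmn_mem ω
      have := hall k hk
      omega
    · rintro ⟨⟨h1, hall⟩, hnot⟩
      refine ⟨h1, ?_⟩
      by_contra hne
      have hge : -(j : ℤ) ≤ mn ω := Finset.le_inf' _ _ (fun k hk => hall k hk)
      exact hnot ⟨h1, fun k hk => by have := hmn_lb ω k hk; omega⟩
  have hmeasB : ∀ j ∈ Finset.range (m + 1), MeasurableSet (B j) := by
    intro j _
    rcases Nat.eq_zero_or_pos j with rfl | hj
    · rw [hB0]; exact Aset_measurable X hmeas _ _ _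
    · rw [hBj j hj]
      exact (Aset_measurable X hmeas _ _ _).diff (Aset_measurable X hmeas _ _ _)
  have hdisjB : (↑(Finset.range (m + 1)) : Set ℕ).PairwiseDisjoint B := by
    intro a _ b _ hab
    refine Set.disjoint_left.mpr ?_
    rintro ω ⟨-, ha2⟩ ⟨-, hb2⟩
    exact hab (by omega)
  have hsum : (μ {ω | M n ω = (m : ℤ)}).toReal
      = ∑ j ∈ Finset.range (m + 1), (μ (B j)).toReal := by
    rw [hMdecomp, measure_biUnion_finset hdisjB hmeasB,
      ENNReal.toReal_sum (fun _ _ => measure_ne_top μ _)]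
  have hval0 : (μ (B 0)).toReal = Qb n (m : ℤ) - Qb n (-(m : ℤ) - 2) := by
    rw [hB0, A_val X hmeas hindep hlaw n 0 (m : ℤ) (by push_cast; omega)]
    have harg : -2 * ((0 : ℕ) : ℤ) - 2 - (m : ℤ) = -(m : ℤ) - 2 := by push_cast; ring
    rw [harg]
  have hvalj : ∀ j : ℕ, 1 ≤ j → j ≤ m →
      (μ (B j)).toReal = Qb n (-(m : ℤ)) - Qb n (-(m : ℤ) - 2) := by
    intro j h1 h2
    have hcast : ((j - 1 : ℕ) : ℤ) = (j : ℤ) - 1 := by push_cast [h1]; ring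
    rw [hBj j h1]
    have hsub : Aset X n (j - 1) ((m : ℤ) - 2 * j) ⊆ Aset X n j ((m : ℤ) - 2 * j) := by
      rintro ω ⟨ha, hb⟩
      exact ⟨ha, fun k hk => by have := hb k hk; rw [hcast] at this; omega⟩
    rw [measure_diff hsub (Aset_measurable X hmeas _ _ _).nullMeasurableSet (measure_ne_top μ _),
      ENNReal.toReal_sub_of_le (measure_mono hsub) (measure_ne_top μ _),
      A_val X hmeas hindep hlaw n j _ (by push_cast; omega),
      A_val X hmeas hindep hlaw n (j - 1) _ (by rw [hcast]; push_cast; omega)]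
    have e1 : -2 * (j : ℤ) - 2 - ((m : ℤ) - 2 * j) = -(m : ℤ) - 2 := by ring
    have e2 : -2 * ((j - 1 : ℕ) : ℤ) - 2 - ((m : ℤ) - 2 * j) = -(m : ℤ) := by rw [hcast]; ring
    rw [e1, e2]
    ring
  have hsumval : ∑ j ∈ Finset.range (m + 1), (μ (B j)).toReal
      = (Qb n (m : ℤ) - Qb n (-(m : ℤ) - 2))
        + m * (Qb n (-(m : ℤ)) - Qb n (-(m : ℤ) - 2)) := by
    rw [Finset.sum_range_succ', hval0]
    have hconst : ∀ j ∈ Finset.range m,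
        (μ (B (j + 1))).toReal = Qb n (-(m : ℤ)) - Qb n (-(m : ℤ) - 2) := fun j hj =>
      hvalj (j + 1) (by omega) (by have := Finset.mem_range.mp hj; omega)
    rw [Finset.sum_congr rfl hconst, Finset.sum_const, Finset.card_range, nsmul_eq_mul]
    ring
  have hsym1 : Qb n (-(m : ℤ)) = Qb n (m : ℤ) := Qb_symm n m
  have hsym2 : Qb n (-(m : ℤ) - 2) = Qb n ((m : ℤ) + 2) := by
    have h := Qb_symm n ((m : ℤ) + 2)
    rw [show -((m : ℤ) + 2) = -(m : ℤ) - 2 by ring] at h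
    exact h
  have hCval : (μ {ω | C n ω = (m : ℤ)}).toReal = Qb n (m : ℤ) := by
    have hceq : {ω | C n ω = (m : ℤ)} = {ω | ∑ i ∈ Finset.range n, X i ω = (m : ℤ)} := by
      ext ω; simp only [Set.mem_setOf_eq, hC]
    rw [hceq, C_val X hmeas hindep hlaw n m]
  rw [hsum, hsumval, hsym1, hsym2, hCval]
  linear_combination Qb_ratio n m
end

section
/- Let a ≥ 0 and let Γ_m, for integers m ≥ 1, be nonnegative reals bounded above by a fixed constant B ≥ 1, such that for some λ > 0 and all m ≥ 1, Γ_m ≤ λ m² √(Γ_{2m}). Then there is a universal constant c'' > 0 such that Γ_1 ≤ c'' · λ². -/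
/-- bootstrap lemma. There is a universal constant `c'' > 0` such that
whenever `(Γ_m)_{m≥1}` are nonnegative reals bounded by some `B ≥ 1` and satisfy
`Γ_m ≤ λ m² √(Γ_{2m})` for all `m ≥ 1` (with `λ > 0`), one has `Γ_1 ≤ c'' λ²`. -/
theorem stmt16 :
    ∃ c'' : ℝ, 0 < c'' ∧
      ∀ (B lam : ℝ) (Γ : ℕ → ℝ), 1 ≤ B → 0 < lam →
        (∀ m : ℕ, 1 ≤ m → 0 ≤ Γ m ∧ Γ m ≤ B) →
        (∀ m : ℕ, 1 ≤ m → Γ m ≤ lam * (m : ℝ) ^ 2 * Real.sqrt (Γ (2 * m))) →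
        Γ 1 ≤ c'' * lam ^ 2 := by
  refine ⟨16, by norm_num, ?_⟩
  intro B lam Γ hB hlam hΓ hrec
  by_contra hcon
  push_neg at hcon
  -- hcon : 16 * lam ^ 2 < Γ 1
  have hΓ1pos : 0 < Γ 1 := lt_of_le_of_lt (by positivity) hcon
  have key : ∀ n : ℕ, (Γ 1) ^ (2 ^ n) ≤
      (lam ^ 2) ^ (2 ^ n - 1) * 16 ^ (2 ^ n - (n + 1)) * Γ (2 ^ n) := by
    intro n
    induction n with
    | zero => simp
    | succ n ih =>
      have h2n : (1 : ℕ) ≤ 2 ^ n := Nat.one_le_two_pow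
      have h2n1 : (1 : ℕ) ≤ 2 ^ (n + 1) := Nat.one_le_two_pow
      have hpos : 0 ≤ Γ (2 ^ n) := (hΓ _ h2n).1
      have hpos2 : 0 ≤ Γ (2 ^ (n + 1)) := (hΓ _ h2n1).1
      have hub : n + 1 ≤ 2 ^ n := Nat.lt_two_pow_self
      -- squared recursion step
      have hstep : Γ (2 ^ n) ^ 2 ≤ lam ^ 2 * 16 ^ n * Γ (2 ^ (n + 1)) := by
        have h := hrec (2 ^ n) h2n
        have h2 : Γ (2 ^ n) ^ 2 ≤ (lam * ((2 ^ n : ℕ) : ℝ) ^ 2 * Real.sqrt (Γ (2 * 2 ^ n))) ^ 2 :=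
          pow_le_pow_left₀ hpos h 2
        have hsq : Real.sqrt (Γ (2 * 2 ^ n)) ^ 2 = Γ (2 * 2 ^ n) :=
          Real.sq_sqrt (by rw [show 2 * 2 ^ n = 2 ^ (n + 1) by ring]; exact hpos2)
        calc Γ (2 ^ n) ^ 2 ≤ (lam * ((2 ^ n : ℕ) : ℝ) ^ 2 * Real.sqrt (Γ (2 * 2 ^ n))) ^ 2 := h2
          _ = lam ^ 2 * (((2 ^ n : ℕ) : ℝ) ^ 2) ^ 2 * Real.sqrt (Γ (2 * 2 ^ n)) ^ 2 := by ring
          _ = lam ^ 2 * 16 ^ n * Γ (2 ^ (n + 1)) := by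
              rw [hsq, show 2 * 2 ^ n = 2 ^ (n + 1) by ring]
              congr 1
              push_cast
              rw [show (((2 : ℝ) ^ n) ^ 2) ^ 2 = ((2 : ℝ) ^ 4) ^ n by
                rw [← pow_mul, ← pow_mul, pow_mul']]
              norm_num
      have hA : (0 : ℝ) ≤ (lam ^ 2) ^ (2 ^ n - 1) * 16 ^ (2 ^ n - (n + 1)) := by positivity
      calc (Γ 1) ^ (2 ^ (n + 1)) = ((Γ 1) ^ (2 ^ n)) ^ 2 := by
              rw [← pow_mul, pow_succ, Nat.mul_comm]
        _ ≤ ((lam ^ 2) ^ (2 ^ n - 1) * 16 ^ (2 ^ n - (n + 1)) * Γ (2 ^ n)) ^ 2 :=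
              pow_le_pow_left₀ (by positivity) ih 2
        _ = ((lam ^ 2) ^ (2 ^ n - 1)) ^ 2 * (16 ^ (2 ^ n - (n + 1))) ^ 2 * Γ (2 ^ n) ^ 2 := by
              ring
        _ ≤ ((lam ^ 2) ^ (2 ^ n - 1)) ^ 2 * (16 ^ (2 ^ n - (n + 1))) ^ 2 *
              (lam ^ 2 * 16 ^ n * Γ (2 ^ (n + 1))) := by
              apply mul_le_mul_of_nonneg_left hstep (by positivity)
        _ = (lam ^ 2) ^ (2 * (2 ^ n - 1) + 1) * 16 ^ (2 * (2 ^ n - (n + 1)) + n) *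
              Γ (2 ^ (n + 1)) := by
              rw [← pow_mul, ← pow_mul, pow_succ, pow_add, pow_mul, pow_mul]
              ring
        _ = (lam ^ 2) ^ (2 ^ (n + 1) - 1) * 16 ^ (2 ^ (n + 1) - (n + 2)) * Γ (2 ^ (n + 1)) := by
              congr 2
              · congr 1; omega
              · congr 1
                have : 2 ^ (n + 1) = 2 * 2 ^ n := by ring
                omega
  -- derive boundedness of r ^ (2 ^ n)
  set t : ℝ := 16 * lam ^ 2 with ht
  have htpos : 0 < t := by positivity
  set r : ℝ := Γ 1 / t with hr
  have hr1 : 1 < r := (one_lt_div htpos).2 hcon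
  have hbdd : ∀ n : ℕ, r ^ (2 ^ n) ≤ B / t := by
    intro n
    have h2n : (1 : ℕ) ≤ 2 ^ n := Nat.one_le_two_pow
    have hkey := key n
    have hΓB : Γ (2 ^ n) ≤ B := (hΓ _ h2n).2
    have h16 : (16 : ℝ) ^ (2 ^ n - (n + 1)) ≤ 16 ^ (2 ^ n - 1) := by
      apply pow_le_pow_right₀ (by norm_num)
      omega
    have hmain : (Γ 1) ^ (2 ^ n) ≤ t ^ (2 ^ n - 1) * B := by
      calc (Γ 1) ^ (2 ^ n) ≤ (lam ^ 2) ^ (2 ^ n - 1) * 16 ^ (2 ^ n - (n + 1)) * Γ (2 ^ n) :=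
            hkey
        _ ≤ (lam ^ 2) ^ (2 ^ n - 1) * 16 ^ (2 ^ n - 1) * B := by
            apply mul_le_mul (mul_le_mul_of_nonneg_left h16 (by positivity)) hΓB
              ((hΓ _ h2n).1) (by positivity)
        _ = t ^ (2 ^ n - 1) * B := by rw [ht, mul_pow]; ring
    have hΓ1 : Γ 1 = t * r := by rw [hr]; exact (mul_div_cancel₀ _ htpos.ne').symm
    have hexp : 2 ^ n = (2 ^ n - 1) + 1 := by omega
    rw [hΓ1, mul_pow, hexp, pow_succ t, pow_succ r] at hmain
    have hrpos : (0 : ℝ) < r ^ (2 ^ n - 1) := by positivity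
    have htp : (0 : ℝ) < t ^ (2 ^ n - 1) := by positivity
    simp only [Nat.add_sub_cancel] at hmain
    have h1 : t ^ (2 ^ n - 1) * (t * (r ^ (2 ^ n - 1) * r)) ≤ t ^ (2 ^ n - 1) * B := by
      calc t ^ (2 ^ n - 1) * (t * (r ^ (2 ^ n - 1) * r))
          = t ^ (2 ^ n - 1) * t * (r ^ (2 ^ n - 1) * r) := by ring
        _ ≤ t ^ (2 ^ n - 1) * B := hmain
    have h2 : t * (r ^ (2 ^ n - 1) * r) ≤ B := le_of_mul_le_mul_left h1 htp
    have h3 : r ^ (2 ^ n - 1) * r ≤ B / t := by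
      rw [le_div_iff₀ htpos]; linarith [h2]
    calc r ^ (2 ^ n) = r ^ (2 ^ n - 1) * r := by conv_lhs => rw [hexp, pow_succ]
      _ ≤ B / t := h3
  -- contradiction: r ^ (2 ^ n) is unbounded
  obtain ⟨k, hk⟩ := pow_unbounded_of_one_lt (B / t) hr1
  have hle : r ^ k ≤ r ^ (2 ^ k) :=
    pow_le_pow_right₀ (le_of_lt hr1) (Nat.le_of_lt (Nat.lt_two_pow_self))
  exact absurd (hbdd k) (not_le.2 (lt_of_lt_of_le hk hle))
end

section
/- Let (Y_n)_{n≥1} be a nondecreasing sequence of nonnegative random variables with Y_n ≤ n. Suppose there exist a constant λ > 0 and, for every ε ∈ (0,1), an n_0 such that for all n ≥ n_0: E[Y_{⌊(1+2λ)n⌋ + ⌊2√n⌋}] - E[Y_{⌊(1+2λ)n⌋ - ⌊2√n⌋}] < 2ε(1+2λ)√n. Then limsup_{n→∞} E[Y_n]/n = 0. -/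
open MeasureTheory Filter

/-- Auxiliary recursively-defined sequence of window centers. -/
private def stmt18seq (N : ℕ) (s : ℕ → ℕ) : ℕ → ℕ
  | 0 => N
  | k + 1 => stmt18seq N s k + s (stmt18seq N s k)

set_option maxHeartbeats 1000000 in
/-- Key real-sequence lemma: monotone nonnegative `g` with small increments over
windows `[⌊Ln⌋ - ⌊2√n⌋, ⌊Ln⌋ + ⌊2√n⌋]` satisfies `g n / n → 0`. -/
private lemma stmt18_key (g : ℕ → ℝ) (L : ℝ) (hL : 1 < L)
    (hg0 : ∀ n, 0 ≤ g n) (hgmono : Monotone g)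
    (hinc : ∀ ε : ℝ, 0 < ε → ε < 1 → ∃ n₀ : ℕ, ∀ n : ℕ, n₀ ≤ n →
      g (⌊L * n⌋₊ + ⌊2 * Real.sqrt n⌋₊) - g (⌊L * n⌋₊ - ⌊2 * Real.sqrt n⌋₊)
        < 2 * ε * L * Real.sqrt n) :
    Tendsto (fun n : ℕ => g n / n) atTop (nhds 0) := by
  have hL0 : (0:ℝ) < L := lt_trans one_pos hL
  refine tendsto_order.2 ⟨fun a ha => ?_, fun δ hδ => ?_⟩
  · filter_upwards with n
    exact lt_of_lt_of_le ha (div_nonneg (hg0 n) (Nat.cast_nonneg n))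
  · -- main direction
    set ε : ℝ := min (1/2) (δ / (32 * L^2)) with hεdef
    have hε0 : 0 < ε := lt_min (by norm_num) (div_pos hδ (by positivity))
    have hε1 : ε < 1 := lt_of_le_of_lt (min_le_left _ _) (by norm_num)
    have hεδ : 16 * ε * L^2 ≤ δ / 2 := by
      have h1 : ε ≤ δ / (32 * L^2) := min_le_right _ _
      have h2 : (0:ℝ) < 32 * L^2 := by positivity
      rw [le_div_iff₀ h2] at h1
      nlinarith
    obtain ⟨n₀, hn₀⟩ := hinc ε hε0 hε1
    set N : ℕ := max n₀ (max 4 ⌈L^2⌉₊) with hNdef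
    set s : ℕ → ℕ := fun n => max 1 ⌊Real.sqrt n / L⌋₊ with hsdef
    set q : ℕ → ℕ := stmt18seq N s with hqdef
    have q0 : q 0 = N := rfl
    have qsucc : ∀ k, q (k+1) = q k + s (q k) := fun k => rfl
    -- basic facts about N
    have hN4 : 4 ≤ N := le_trans (le_max_left 4 _) (le_max_right n₀ _)
    have hNL : (L^2 : ℝ) ≤ N := by
      have := Nat.le_ceil (L^2)
      exact le_trans this (by exact_mod_cast le_trans (le_max_right 4 _) (le_max_right n₀ _))
    have hNn₀ : n₀ ≤ N := le_max_left _ _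
    -- every q k is at least N (and at least N + k)
    have hqge : ∀ k, N + k ≤ q k := by
      intro k
      induction k with
      | zero => simp [q0]
      | succ k ih =>
        rw [qsucc]
        have : 1 ≤ s (q k) := le_max_left _ _
        omega
    have hqN : ∀ k, N ≤ q k := fun k => le_trans (Nat.le_add_right N k) (hqge k)
    -- facts about any n ≥ N
    have hfacts : ∀ n : ℕ, N ≤ n →
        (2 ≤ Real.sqrt n) ∧ (L ≤ Real.sqrt n) := by
      intro n hn
      have hn4 : (4:ℝ) ≤ n := by exact_mod_cast le_trans hN4 hn
      have hnL : (L^2:ℝ) ≤ n := le_trans hNL (by exact_mod_cast hn)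
      constructor
      · have : Real.sqrt 4 ≤ Real.sqrt n := Real.sqrt_le_sqrt hn4
        have h4 : Real.sqrt 4 = 2 := by
          rw [show (4:ℝ) = 2^2 by norm_num, Real.sqrt_sq (by norm_num)]
        linarith [this, h4.symm.le]
      · have : Real.sqrt (L^2) ≤ Real.sqrt n := Real.sqrt_le_sqrt hnL
        rwa [Real.sqrt_sq hL0.le] at this
    -- s n equals the floor and is controlled
    have hs_eq : ∀ n : ℕ, N ≤ n → s n = ⌊Real.sqrt n / L⌋₊ := by
      intro n hn
      have hLs := (hfacts n hn).2
      have h1 : (1:ℝ) ≤ Real.sqrt n / L := (le_div_iff₀ hL0).2 (by linarith)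
      have : 1 ≤ ⌊Real.sqrt n / L⌋₊ := Nat.le_floor (by exact_mod_cast h1)
      simp [hsdef, max_eq_right this]
    have hs_upper : ∀ n : ℕ, N ≤ n → L * (s n : ℝ) ≤ Real.sqrt n := by
      intro n hn
      rw [hs_eq n hn]
      have h1 : (⌊Real.sqrt n / L⌋₊ : ℝ) ≤ Real.sqrt n / L :=
        Nat.floor_le (div_nonneg (Real.sqrt_nonneg _) hL0.le)
      calc L * (⌊Real.sqrt n / L⌋₊ : ℝ) ≤ L * (Real.sqrt n / L) := by nlinarith
        _ = Real.sqrt n := by field_simp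
    have hs_lower : ∀ n : ℕ, N ≤ n → Real.sqrt n ≤ 2 * L * (s n : ℝ) := by
      intro n hn
      have heq := hs_eq n hn
      have h1 : Real.sqrt n / L < (⌊Real.sqrt n / L⌋₊ : ℝ) + 1 := Nat.lt_floor_add_one _
      have hLs := (hfacts n hn).2
      have hge1 : (1:ℝ) ≤ (⌊Real.sqrt n / L⌋₊ : ℝ) := by
        have h1' : (1:ℝ) ≤ Real.sqrt n / L := (le_div_iff₀ hL0).2 (by linarith)
        exact_mod_cast Nat.le_floor (by exact_mod_cast h1')
      have h2 : Real.sqrt n / L < 2 * (⌊Real.sqrt n / L⌋₊ : ℝ) := by linarith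
      have h3 : Real.sqrt n < L * (2 * (⌊Real.sqrt n / L⌋₊ : ℝ)) := by
        rw [div_lt_iff₀ hL0] at h2; linarith [h2]
      rw [heq]; nlinarith
    -- s n ≤ n, hence q (k+1) ≤ 2 * q k
    have hs_le_n : ∀ n : ℕ, N ≤ n → s n ≤ n := by
      intro n hn
      have h1 : L * (s n : ℝ) ≤ Real.sqrt n := hs_upper n hn
      have hn1 : (1:ℝ) ≤ n := by
        have : (4:ℕ) ≤ n := le_trans hN4 hn
        exact_mod_cast le_trans (by norm_num) this
      have h2 : Real.sqrt n ≤ n := by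
        calc Real.sqrt n ≤ Real.sqrt ((n:ℝ)^2) := Real.sqrt_le_sqrt (by nlinarith)
          _ = n := Real.sqrt_sq (Nat.cast_nonneg n)
      have : (s n : ℝ) ≤ n := by nlinarith
      exact_mod_cast this
    have hq2 : ∀ k, q (k+1) ≤ 2 * q k := by
      intro k
      rw [qsucc]
      have := hs_le_n (q k) (hqN k)
      omega
    -- overlap: windows at consecutive q's overlap
    have hoverlap : ∀ k, ⌊L * (q (k+1) : ℕ)⌋₊ ≤ ⌊L * (q k)⌋₊ + ⌊2 * Real.sqrt (q k)⌋₊ := by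
      intro k
      set n := q k
      have hn : N ≤ n := hqN k
      have h2s := (hfacts n hn).1
      have hsu := hs_upper n hn
      have hA : (⌊L * ((n + s n : ℕ) : ℝ)⌋₊ : ℝ) ≤ L * n + L * s n := by
        have := Nat.floor_le (show (0:ℝ) ≤ L * ((n + s n : ℕ):ℝ) by positivity)
        push_cast at this ⊢
        linarith
      have hB1 : L * (n:ℝ) - 1 < (⌊L * (n:ℝ)⌋₊ : ℝ) := by
        have := Nat.lt_floor_add_one (L * (n:ℝ))
        linarith
      have hB2 : 2 * Real.sqrt n - 1 < (⌊2 * Real.sqrt n⌋₊ : ℝ) := by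
        have := Nat.lt_floor_add_one (2 * Real.sqrt n)
        linarith
      have key : (⌊L * ((n + s n : ℕ):ℝ)⌋₊ : ℝ) < (⌊L * (n:ℝ)⌋₊ : ℝ) + (⌊2 * Real.sqrt n⌋₊ : ℝ) := by
        linarith
      have : (⌊L * ((n + s n : ℕ):ℝ)⌋₊ : ℕ) < ⌊L * (n:ℝ)⌋₊ + ⌊2 * Real.sqrt n⌋₊ := by
        exact_mod_cast key
      rw [qsucc]
      exact le_of_lt this
    -- telescoping bound
    set C : ℝ := g (⌊L * (N:ℕ)⌋₊ + ⌊2 * Real.sqrt N⌋₊) with hCdef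
    have htel : ∀ k, g (⌊L * (q k)⌋₊ + ⌊2 * Real.sqrt (q k)⌋₊)
        ≤ C + 4 * ε * L^2 * ((q (k+1) : ℝ) - (q 1 : ℝ)) := by
      intro k
      induction k with
      | zero => simp [q0, hCdef]
      | succ k ih =>
        set n := q (k+1) with hn
        have hnN : N ≤ n := hqN (k+1)
        -- window increment at n
        have hwin := hn₀ n (le_trans hNn₀ hnN)
        -- monotone step to previous window
        have hmono1 : g (⌊L * (n:ℝ)⌋₊ - ⌊2 * Real.sqrt n⌋₊)
            ≤ g (⌊L * (q k)⌋₊ + ⌊2 * Real.sqrt (q k)⌋₊) :=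
          hgmono (le_trans (Nat.sub_le _ _) (hoverlap k))
        -- sqrt bound against next step
        have hsl := hs_lower n hnN
        have hstep : (q (k+2) : ℝ) - (q (k+1) : ℝ) = (s n : ℝ) := by
          have := qsucc (k+1)
          rw [← hn] at this
          rw [show k+2 = (k+1)+1 from rfl, this, ← hn]
          push_cast; ring
        have hsq : Real.sqrt n ≤ 2 * L * ((q (k+2) : ℝ) - (q (k+1) : ℝ)) := by
          rw [hstep]; exact hsl
        have hεL : (0:ℝ) ≤ 2 * ε * L := by positivity
        have h4 : 2 * ε * L * Real.sqrt n ≤ 2 * ε * L * (2 * L * ((q (k+2) : ℝ) - (q (k+1) : ℝ))) :=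
          mul_le_mul_of_nonneg_left hsq hεL
        have : g (⌊L * (n:ℝ)⌋₊ + ⌊2 * Real.sqrt n⌋₊)
            ≤ g (⌊L * (q k)⌋₊ + ⌊2 * Real.sqrt (q k)⌋₊) + 2 * ε * L * Real.sqrt n := by
          linarith
        calc g (⌊L * (n:ℝ)⌋₊ + ⌊2 * Real.sqrt n⌋₊)
            ≤ C + 4 * ε * L^2 * ((q (k+1) : ℝ) - (q 1 : ℝ)) + 2 * ε * L * Real.sqrt n := by
              linarith
          _ ≤ C + 4 * ε * L^2 * ((q (k+2) : ℝ) - (q 1 : ℝ)) := by nlinarith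
    -- coverage bound
    have hA_ge : ∀ n : ℕ, n ≤ ⌊L * (n:ℝ)⌋₊ := by
      intro n
      apply Nat.le_floor
      have : (n:ℝ) * 1 ≤ (n:ℝ) * L := by
        apply mul_le_mul_of_nonneg_left hL.le (Nat.cast_nonneg n)
      push_cast
      linarith
    have hcov : ∀ m : ℕ, ⌊L * (N:ℝ)⌋₊ ≤ m → g m ≤ C + 16 * ε * L^2 * m := by
      intro m hm
      have hex : ∃ k, m < ⌊L * ((q k : ℕ) : ℝ)⌋₊ := by
        refine ⟨m + 1, ?_⟩
        have h1 : m + 1 ≤ q (m+1) := le_trans (by omega) (hqge (m+1))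
        exact lt_of_lt_of_le (Nat.lt_succ_self m) (le_trans h1 (hA_ge _))
      set K := Nat.find hex with hKdef
      have hKspec : m < ⌊L * ((q K : ℕ) : ℝ)⌋₊ := Nat.find_spec hex
      have hK0 : K ≠ 0 := by
        intro h
        rw [h] at hKspec
        simp only [q0] at hKspec
        omega
      obtain ⟨j, hj⟩ : ∃ j, K = j + 1 := ⟨K - 1, by omega⟩
      have hjlt : ¬ (m < ⌊L * ((q j : ℕ) : ℝ)⌋₊) := Nat.find_min hex (by omega)
      push_neg at hjlt
      have hqjm : q j ≤ m := le_trans (hA_ge (q j)) hjlt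
      -- chain of inequalities
      have h1 : g m ≤ g (⌊L * ((q (j+1) : ℕ) : ℝ)⌋₊ + ⌊2 * Real.sqrt (q (j+1))⌋₊) := by
        apply hgmono
        rw [hj] at hKspec
        omega
      have h2 := htel (j+1)
      have h3 : (q (j+2) : ℝ) ≤ 4 * m := by
        have ha : q (j+2) ≤ 2 * q (j+1) := hq2 (j+1)
        have hb := hq2 j
        have : q (j+2) ≤ 4 * q j := by omega
        have : (q (j+2) : ℝ) ≤ 4 * (q j : ℝ) := by exact_mod_cast this
        have hc : (q j : ℝ) ≤ m := by exact_mod_cast hqjm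
        linarith
      have h4 : (0:ℝ) ≤ (q 1 : ℝ) := Nat.cast_nonneg _
      have h5 : (0:ℝ) ≤ 4 * ε * L^2 := by positivity
      have h6 : 4 * ε * L^2 * ((q (j+2) : ℝ) - (q 1 : ℝ)) ≤ 4 * ε * L^2 * (4 * (m:ℝ)) :=
        mul_le_mul_of_nonneg_left (by linarith) h5
      have h7 : 4 * ε * L^2 * (4 * (m:ℝ)) = 16 * ε * L^2 * m := by ring
      linarith
    -- finish: eventually g m / m < δ
    have hC0 : 0 ≤ C := hg0 _
    filter_upwards [eventually_ge_atTop (⌊L * (N:ℝ)⌋₊ + 1),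
      eventually_gt_atTop ⌈2 * C / δ⌉₊] with m h1 h2
    have hm1 : 1 ≤ m := by omega
    have hm0 : (0:ℝ) < m := by exact_mod_cast hm1
    have hgm := hcov m (by omega)
    have hCm : C / m < δ / 2 := by
      have ha : (2 * C / δ : ℝ) < m := by
        have := Nat.le_ceil (2 * C / δ)
        have hb : (⌈2 * C / δ⌉₊ : ℝ) < m := by exact_mod_cast h2
        linarith
      rw [div_lt_div_iff₀ hm0 (by norm_num : (0:ℝ) < 2)]
      rw [div_lt_iff₀ hδ] at ha
      linarith
    have hdiv : g m / m ≤ C / m + 16 * ε * L^2 := by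
      rw [div_le_iff₀ hm0] at *
      have : (C / m) * m = C := by field_simp
      nlinarith [hgm, hm0]
    linarith

/-- if `(Y_n)` is a nondecreasing sequence of nonnegative random variables
with `Y_n ≤ n`, and for every `ε ∈ (0,1)` and all large `n` the expectation increment
`E[Y_{⌊(1+2λ)n⌋+⌊2√n⌋}] - E[Y_{⌊(1+2λ)n⌋-⌊2√n⌋}] < 2ε(1+2λ)√n`, then
`limsup E[Y_n]/n = 0`. -/
theorem stmt18 {Ω : Type*} [MeasurableSpace Ω] (μ : Measure Ω) [IsProbabilityMeasure μ]
    (Y : ℕ → Ω → ℝ) (lam : ℝ) (hlam : 0 < lam)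
    (hint : ∀ n, Integrable (Y n) μ)
    (hnn : ∀ n ω, 0 ≤ Y n ω)
    (hmono : ∀ n ω, Y n ω ≤ Y (n + 1) ω)
    (hbd : ∀ n ω, Y n ω ≤ n)
    (hinc : ∀ ε : ℝ, 0 < ε → ε < 1 → ∃ n₀ : ℕ, ∀ n : ℕ, n₀ ≤ n →
      (∫ ω, Y (⌊(1 + 2 * lam) * n⌋₊ + ⌊2 * Real.sqrt n⌋₊) ω ∂μ)
          - (∫ ω, Y (⌊(1 + 2 * lam) * n⌋₊ - ⌊2 * Real.sqrt n⌋₊) ω ∂μ)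
        < 2 * ε * (1 + 2 * lam) * Real.sqrt n) :
    limsup (fun n : ℕ => (∫ ω, Y n ω ∂μ) / n) atTop = 0 := by
  set g : ℕ → ℝ := fun n => ∫ ω, Y n ω ∂μ with hgdef
  have hg0 : ∀ n, 0 ≤ g n := fun n => integral_nonneg (hnn n)
  have hgmono : Monotone g := by
    apply monotone_nat_of_le_succ
    intro n
    exact integral_mono (hint n) (hint (n+1)) (fun ω => hmono n ω)
  have hT : Tendsto (fun n : ℕ => g n / n) atTop (nhds 0) := by
    apply stmt18_key g (1 + 2 * lam) (by linarith) hg0 hgmono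
    exact hinc
  exact hT.limsup_eq
end
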